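/- Suppose that for every a > 0 the quantity c(a) := a · sup{‖R_{a+ib}‖ : b ∈ ℝ} is finite. Then for every t ≥ 0, N(t) ≥ sup over all a > 0 with c(a) ≥ 1 of min{ e^{r(a)t}, c(a) }, where r(a) = a(1 − 1/c(a)). -/

import Mathlib

open MeasureTheory Filter Set

set_option maxHeartbeats 1600000

lemma exp_integral_aux (d : ℝ) (hd : 0 < d) :
    ∫ s in Ioi (0:ℝ), Real.exp (-d * s) = 1/d := by
  simp only [neg_mul, ← neg_mul_eq_neg_mul]
  rw [integral_comp_mul_left_Ioi (fun x => Real.exp (-x)) 0 hd]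
  simp [integral_exp_neg_Ioi, smul_eq_mul, one_div, integral_exp_Iic_zero]

theorem stmt_6
    {B : Type*} [NormedAddCommGroup B] [NormedSpace ℂ B] [CompleteSpace B]
    (T : ℝ → (B →L[ℂ] B))
    (hT0 : ‖T 0‖ = 1)
    (hcont : ∀ f : B, ContinuousOn (fun t => T t f) (Set.Ici (0:ℝ)))
    (Mb ωb : ℝ) (hbound : ∀ t : ℝ, 0 ≤ t → ‖T t‖ ≤ Mb * Real.exp (ωb * t))
    (hω₀ : Filter.limsup (fun t : ℝ => ((Real.log ‖T t‖ / t : ℝ) : EReal)) Filter.atTop = 0)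
    (ν : ℝ → ℝ)
    (hν_concave : ConcaveOn ℝ (Set.Ici (0:ℝ)) ν)
    (hν_ge : ∀ t : ℝ, 0 ≤ t → Real.log ‖T t‖ ≤ ν t)
    (hν_min : ∀ κ : ℝ → ℝ, ConcaveOn ℝ (Set.Ici (0:ℝ)) κ →
        (∀ t : ℝ, 0 ≤ t → Real.log ‖T t‖ ≤ κ t) → ∀ t : ℝ, 0 ≤ t → ν t ≤ κ t)
    (R : ℂ → (B →L[ℂ] B))
    (hRint : ∀ z : ℂ, 0 < z.re → ∀ f : B,
      MeasureTheory.IntegrableOn (fun s : ℝ => Complex.exp (-(z * s)) • T s f) (Set.Ioi 0))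
    (hR : ∀ z : ℂ, 0 < z.re → ∀ f : B,
      R z f = ∫ s in Set.Ioi (0:ℝ), Complex.exp (-(z * s)) • T s f)
    (hBdd : ∀ a : ℝ, 0 < a →
      BddAbove (Set.range fun b : ℝ => ‖R (a + b * Complex.I)‖)) :
    ∀ t : ℝ, 0 ≤ t → ∀ a : ℝ, 0 < a → ∀ ca ra : ℝ,
      ca = a * sSup (Set.range fun b : ℝ => ‖R (a + b * Complex.I)‖) →
      ra = a * (1 - 1/ca) → 1 ≤ ca →
      min (Real.exp (ra * t)) ca ≤ Real.exp (ν t) := by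
  intro t0 ht0 a ha ca ra hca hra hca1
  have hν0 : 0 ≤ ν 0 := by
    have := hν_ge 0 le_rfl
    rwa [hT0, Real.log_one] at this
  rcases eq_or_lt_of_le ht0 with h0 | ht0pos
  · -- t0 = 0
    rw [← h0]
    calc min (Real.exp (ra * 0)) ca ≤ Real.exp (ra * 0) := min_le_left _ _
    _ = 1 := by simp
    _ ≤ Real.exp (ν 0) := by rw [← Real.exp_zero]; exact Real.exp_le_exp.mpr hν0
  by_contra hcon
  push_neg at hcon
  have hm1 : ν t0 < ra * t0 := Real.exp_lt_exp.mp (lt_min_iff.mp hcon).1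
  have hm2 : Real.exp (ν t0) < ca := (lt_min_iff.mp hcon).2
  set m := ν t0 with hm
  have hca0 : (0:ℝ) < ca := lt_of_lt_of_le one_pos hca1
  have hra0 : 0 ≤ ra := by
    rw [hra]
    have h1 : 1/ca ≤ 1 := by rw [div_le_one hca0]; exact hca1
    nlinarith
  have hra_lt_a : ra < a := by
    rw [hra]
    have : 0 < 1/ca := by positivity
    nlinarith
  set β := m / t0 with hβdef
  have hβ : β < ra := (div_lt_iff₀ ht0pos).2 (by linarith)
  -- the set of slopes to the right of t0
  set S := {x : ℝ | ∃ u : ℝ, t0 < u ∧ x = (ν u - m) / (u - t0)} with hSdef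
  have hSne : S.Nonempty := ⟨(ν (t0+1) - m) / (t0+1 - t0), t0+1, by linarith, rfl⟩
  have hSub : ∀ x ∈ S, x ≤ (m - ν 0) / t0 := by
    rintro x ⟨u, hu, rfl⟩
    have h := hν_concave.slope_anti_adjacent (x := 0) (y := t0) (z := u)
      Set.self_mem_Ici (Set.mem_Ici.mpr (ht0pos.trans hu).le) ht0pos hu
    simpa using h
  have hbddS : BddAbove S := ⟨_, hSub⟩
  set σ := sSup S with hσdef
  have hσβ : σ ≤ β := by
    apply csSup_le hSne
    intro x hx
    refine (hSub x hx).trans ?_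
    rw [hβdef]
    gcongr
    linarith
  have hσ0 : 0 ≤ σ := by
    by_contra hneg
    push_neg at hneg
    set ε := -σ/2 with hεdef
    have hε : 0 < ε := by simp only [hεdef]; linarith
    have hlt : ((-ε : ℝ) : EReal) <
        Filter.limsup (fun t : ℝ => ((Real.log ‖T t‖ / t : ℝ) : EReal)) Filter.atTop := by
      rw [hω₀]
      exact_mod_cast (by linarith : (-ε:ℝ) < 0)
    have hfreq := Filter.frequently_lt_of_lt_limsup (by isBoundedDefault) hlt
    obtain ⟨u, hu1, hu2⟩ := (hfreq.and_eventually
      (Filter.eventually_ge_atTop (max (t0+1) ((2*m + 3*ε*t0)/ε + 1)))).exists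
    have hu1' : -ε < Real.log ‖T u‖ / u := by exact_mod_cast hu1
    have hut0 : t0 < u := lt_of_lt_of_le (by linarith) (le_trans (le_max_left _ _) hu2)
    have hupos : 0 < u := ht0pos.trans hut0
    have huM : (2*m + 3*ε*t0)/ε + 1 ≤ u := le_trans (le_max_right _ _) hu2
    have hεu : 2*m + 3*ε*t0 + ε ≤ ε * u := by
      have h1 := mul_le_mul_of_nonneg_left huM hε.le
      have h2 : ε * ((2*m + 3*ε*t0)/ε) = 2*m + 3*ε*t0 := by
        field_simp
      nlinarith [h1, h2]
    have hlog : -ε * u < Real.log ‖T u‖ := (lt_div_iff₀ hupos).mp hu1'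
    have hνu : -ε * u < ν u := lt_of_lt_of_le hlog (hν_ge u hupos.le)
    have hslope : -(3/2)*ε ≤ (ν u - m) / (u - t0) := by
      rw [le_div_iff₀ (by linarith : (0:ℝ) < u - t0)]
      nlinarith
    have hmem : (ν u - m) / (u - t0) ∈ S := ⟨u, hut0, rfl⟩
    have hle := le_csSup hbddS hmem
    rw [← hσdef] at hle
    simp only [hεdef] at hslope
    linarith
  have hσa : σ < a := lt_of_le_of_lt hσβ (hβ.trans hra_lt_a)
  -- global linear bound
  have hlin : ∀ u : ℝ, 0 ≤ u → ν u ≤ m + σ * (u - t0) := by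
    intro u hu
    rcases lt_trichotomy u t0 with h | h | h
    · have hub : σ ≤ (m - ν u) / (t0 - u) := by
        apply csSup_le hSne
        rintro x ⟨w, hw, rfl⟩
        have hcc := hν_concave.slope_anti_adjacent (x := u) (y := t0) (z := w)
          (Set.mem_Ici.mpr hu) (Set.mem_Ici.mpr (hu.trans (h.trans hw).le)) h hw
        rw [hm]
        exact hcc
      have h2 := (le_div_iff₀ (by linarith : (0:ℝ) < t0 - u)).mp hub
      have h3 : σ * (u - t0) = -(σ * (t0 - u)) := by ring
      linarith
    · rw [h]; simp [hm]
    · have h1 := le_csSup hbddS (show (ν u - m)/(u - t0) ∈ S from ⟨u, h, rfl⟩)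
      rw [← hσdef] at h1
      have h2 := (div_le_iff₀ (by linarith : (0:ℝ) < u - t0)).mp h1
      linarith
  -- bound on resolvent norms
  have haσ : (0:ℝ) < a - σ := by linarith
  have hK : ∀ b : ℝ, ‖R (a + b * Complex.I)‖ ≤ Real.exp (m - σ*t0) / (a - σ) := by
    intro b
    set z : ℂ := (a:ℂ) + (b:ℂ) * Complex.I with hz
    have hz0 : 0 < z.re := by simp [hz, ha]
    apply ContinuousLinearMap.opNorm_le_bound _ (by positivity)
    intro f
    rw [hR z hz0 f]
    calc ‖∫ s in Ioi (0:ℝ), Complex.exp (-(z * s)) • T s f‖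
        ≤ ∫ s in Ioi (0:ℝ), ‖Complex.exp (-(z * s)) • T s f‖ :=
          norm_integral_le_integral_norm _
      _ ≤ ∫ s in Ioi (0:ℝ), (Real.exp (m - σ*t0) * ‖f‖) * Real.exp (-(a-σ) * s) := by
          apply setIntegral_mono_on ((hRint z hz0 f).norm)
            (((exp_neg_integrableOn_Ioi 0 haσ).const_mul _)) measurableSet_Ioi
          intro s hs
          have hs0 : (0:ℝ) < s := hs
          rw [norm_smul]
          have h1 : ‖Complex.exp (-(z * s))‖ = Real.exp (-(a*s)) := by
            rw [Complex.norm_exp]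
            congr 1
            simp [hz, Complex.mul_re]
          have h2 : ‖T s f‖ ≤ Real.exp (m + σ * (s - t0)) * ‖f‖ := by
            have h3 : ‖T s f‖ ≤ ‖T s‖ * ‖f‖ := (T s).le_opNorm f
            have h4 : ‖T s‖ ≤ Real.exp (ν s) := by
              rcases (norm_nonneg (T s)).eq_or_lt with h' | h'
              · rw [← h']; positivity
              · rw [← Real.exp_log h']
                exact Real.exp_le_exp.mpr (hν_ge s hs0.le)
            have h5 : Real.exp (ν s) ≤ Real.exp (m + σ * (s - t0)) :=
              Real.exp_le_exp.mpr (hlin s hs0.le)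
            calc ‖T s f‖ ≤ ‖T s‖ * ‖f‖ := h3
              _ ≤ Real.exp (m + σ * (s - t0)) * ‖f‖ := by
                  exact mul_le_mul_of_nonneg_right (h4.trans h5) (norm_nonneg f)
          rw [h1]
          calc Real.exp (-(a*s)) * ‖T s f‖
              ≤ Real.exp (-(a*s)) * (Real.exp (m + σ * (s - t0)) * ‖f‖) :=
                mul_le_mul_of_nonneg_left h2 (Real.exp_pos _).le
            _ = (Real.exp (m - σ*t0) * ‖f‖) * Real.exp (-(a-σ) * s) := by
                rw [show Real.exp (-(a*s)) * (Real.exp (m + σ * (s - t0)) * ‖f‖)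
                    = (Real.exp (-(a*s)) * Real.exp (m + σ * (s - t0))) * ‖f‖ from by ring,
                  ← Real.exp_add,
                  show (Real.exp (m - σ*t0) * ‖f‖) * Real.exp (-(a-σ) * s)
                    = (Real.exp (m - σ*t0) * Real.exp (-(a-σ) * s)) * ‖f‖ from by ring,
                  ← Real.exp_add]
                ring_nf
      _ = Real.exp (m - σ*t0) / (a - σ) * ‖f‖ := by
          rw [MeasureTheory.integral_const_mul, exp_integral_aux _ haσ]
          ring
  -- contradiction
  have hsup : sSup (Set.range fun b : ℝ => ‖R (a + b * Complex.I)‖)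
      ≤ Real.exp (m - σ*t0) / (a - σ) := by
    apply csSup_le (Set.range_nonempty _)
    rintro x ⟨b, rfl⟩; exact hK b
  have hca_le : ca ≤ a * (Real.exp (m - σ*t0) / (a - σ)) := by
    rw [hca]; exact mul_le_mul_of_nonneg_left hsup ha.le
  have hβa : β < a := hβ.trans hra_lt_a
  have hlogca : m < Real.log ca := (Real.lt_log_iff_exp_lt hca0).mpr hm2
  have hfinal : a * (Real.exp (m - σ*t0) / (a - σ)) < ca := by
    have hkey : Real.exp (m - σ*t0) * a < ca * (a - σ) := by
      rcases le_or_gt β 0 with hβ0 | hβ0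
      · have hσ0' : σ = 0 := le_antisymm (hσβ.trans hβ0) hσ0
        rw [hσ0']
        simp only [mul_zero, sub_zero, zero_mul]
        have h' := Real.exp_lt_exp.mpr hlogca
        rw [Real.exp_log hca0] at h'
        exact mul_lt_mul_of_pos_right h' ha
      · set l := σ / β with hldef
        have hl0 : 0 ≤ l := div_nonneg hσ0 hβ0.le
        have hl1 : l ≤ 1 := (div_le_one hβ0).mpr hσβ
        have hlβ : l * β = σ := div_mul_cancel₀ σ (ne_of_gt hβ0)
        have hβt0 : β * t0 = m := div_mul_cancel₀ m (ne_of_gt ht0pos)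
        have h1β : (0:ℝ) < 1 - β/a := by
          have : β/a < 1 := (div_lt_one ha).mpr hβa
          linarith
        have h1σ : (0:ℝ) < 1 - σ/a := by
          have : σ/a < 1 := (div_lt_one ha).mpr hσa
          linarith
        -- endpoint at β
        have keyβ : 0 < Real.log ca + Real.log (1 - β/a) := by
          have hstep : 1/ca < 1 - β/a := by
            have h' : β < a * (1 - 1/ca) := by rw [← hra]; exact hβ
            have h2' : β / a < 1 - 1/ca :=
              (div_lt_iff₀ ha).mpr (by rw [mul_comm]; exact h')
            linarith
          have h2 : 1 < ca * (1 - β/a) := by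
            calc (1:ℝ) = ca * (1/ca) := by field_simp
              _ < ca * (1 - β/a) := by
                  exact mul_lt_mul_of_pos_left hstep hca0
          have := Real.log_pos h2
          rwa [Real.log_mul (ne_of_gt hca0) (ne_of_gt h1β)] at this
        -- concavity of log
        have hconc := strictConcaveOn_log_Ioi.concaveOn
        have hcomb : (1 - l) • (1:ℝ) + l • (1 - β/a) = 1 - σ/a := by
          have : l * (β/a) = σ/a := by
            rw [← hlβ]; ring
          simp only [smul_eq_mul]
          linarith [this]
        have hc := hconc.2 (Set.mem_Ioi.mpr one_pos) (Set.mem_Ioi.mpr h1β)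
          (by linarith : (0:ℝ) ≤ 1 - l) hl0 (by ring)
        rw [hcomb] at hc
        simp only [smul_eq_mul, Real.log_one, mul_zero, zero_add] at hc
        -- hc : (1-l) * log 1 + l * log (1-β/a) ≤ log (1 - σ/a), simplified
        have hσt0 : σ * t0 = l * m := by rw [← hlβ, ← hβt0]; ring
        have hc3 : 0 < Real.log ca - m + l * m + l * Real.log (1 - β/a) := by
          rcases hl0.eq_or_lt with h' | h'
          · rw [← h']; simpa using hlogca
          · nlinarith [mul_pos h' keyβ,
              mul_nonneg (by linarith : (0:ℝ) ≤ 1 - l) (by linarith : (0:ℝ) ≤ Real.log ca - m)]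
        have hmain : m - σ*t0 < Real.log ca + Real.log (1 - σ/a) := by
          rw [hσt0]
          linarith
        have hexp := Real.exp_lt_exp.mpr hmain
        rw [Real.exp_add, Real.exp_log hca0, Real.exp_log h1σ] at hexp
        have h5 := mul_lt_mul_of_pos_right hexp ha
        have h6 : ca * (1 - σ/a) * a = ca * (a - σ) := by
          field_simp
        linarith
    rw [mul_comm a, div_mul_eq_mul_div, div_lt_iff₀ haσ]
    linarith
  linarith
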